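/- Let U ⊆ ℂ be an open set not containing 0. Suppose x, y : ℂ → ℂ are differentiable on U, satisfy the Filipuk–Żołądek system x'(t) = x² y/t and y'(t) = −8 − x y²/t + 8/x² (i.e. the case α = −8, β = 8, γ = 0, δ = 0) on U, and x(t) ≠ 0 on U. Suppose q, p : ℂ → ℂ are differentiable functions with q(t²) = t x(t) and p(t²) = (x(t) y(t) − 1)/(4 t x(t)) for all t ∈ U. Then for all s = t² with t ∈ U, q and p satisfy the Hamiltonian system associated to the degenerate (surface type D₈⁽¹⁾) KNY Hamiltonian K₂(q,p,s) = (q² p² + q p + q + s/q)/s, namely q'(s) = (2 q² p + q)/s and p'(s) = −(2 q p² + p + 1 − s/q²)/s. -/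

import Mathlib

/-- Under `s = t²`, `q(t²) = t x(t)`, `p(t²) = (xy − 1)/(4tx)`,
solutions of the Filipuk–Żołądek system with `α = −8`, `β = 8`, `γ = δ = 0`
are mapped to solutions of the system with degenerate (surface type `D₈⁽¹⁾`)
KNY Hamiltonian `K₂ = (q²p² + qp + q + s/q)/s`. -/
theorem FZ_to_degenerate_KNY_D8
    (U : Set ℂ) (hU : IsOpen U) (hU0 : (0 : ℂ) ∉ U) (x y : ℂ → ℂ)
    (hx : ∀ t ∈ U, HasDerivAt x ((x t) ^ 2 * y t / t) t)
    (hy : ∀ t ∈ U, HasDerivAt y (-8 - x t * (y t) ^ 2 / t + 8 / (x t) ^ 2) t)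
    (hxne : ∀ t ∈ U, x t ≠ 0)
    (q p : ℂ → ℂ)
    (hqd : ∀ t ∈ U, DifferentiableAt ℂ q (t ^ 2))
    (hpd : ∀ t ∈ U, DifferentiableAt ℂ p (t ^ 2))
    (hq : ∀ t ∈ U, q (t ^ 2) = t * x t)
    (hp : ∀ t ∈ U, p (t ^ 2) = (x t * y t - 1) / (4 * t * x t)) :
    ∀ t ∈ U, ∀ s, s = t ^ 2 →
      HasDerivAt q ((2 * (q s) ^ 2 * p s + q s) / s) s ∧
      HasDerivAt p (-((2 * q s * (p s) ^ 2 + p s + 1 - s / (q s) ^ 2) / s)) s := by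
  intro t ht s hs
  subst hs
  have ht0 : t ≠ 0 := fun h => hU0 (h ▸ ht)
  have hx0 : x t ≠ 0 := hxne t ht
  have hsq : HasDerivAt (fun u : ℂ => u ^ 2) (2 * t) t := by
    simpa using hasDerivAt_pow 2 t
  -- q part
  have hq1 : HasDerivAt (fun u => q (u ^ 2)) (deriv q (t ^ 2) * (2 * t)) t :=
    ((hqd t ht).hasDerivAt).comp t hsq
  have heq : (fun u => q (u ^ 2)) =ᶠ[nhds t] fun u => u * x u := by
    filter_upwards [hU.mem_nhds ht] with u hu using hq u hu
  have hq2 : HasDerivAt (fun u => u * x u) (deriv q (t ^ 2) * (2 * t)) t :=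
    hq1.congr_of_eventuallyEq heq.symm
  have hq3 : HasDerivAt (fun u => u * x u) (1 * x t + t * ((x t) ^ 2 * y t / t)) t :=
    (hasDerivAt_id t).mul (hx t ht)
  have E1 : deriv q (t ^ 2) * (2 * t) = 1 * x t + t * ((x t) ^ 2 * y t / t) :=
    hq2.unique hq3
  -- p part
  have hp1 : HasDerivAt (fun u => p (u ^ 2)) (deriv p (t ^ 2) * (2 * t)) t :=
    ((hpd t ht).hasDerivAt).comp t hsq
  have heqp : (fun u => p (u ^ 2)) =ᶠ[nhds t] fun u => (x u * y u - 1) / (4 * u * x u) := by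
    filter_upwards [hU.mem_nhds ht] with u hu using hp u hu
  have hnum : HasDerivAt (fun u => x u * y u - 1)
      ((8 - 8 * (x t) ^ 2) / x t) t := by
    have h0 : HasDerivAt (fun u => x u * y u - 1)
        ((x t) ^ 2 * y t / t * y t + x t * (-8 - x t * (y t) ^ 2 / t + 8 / (x t) ^ 2)) t :=
      ((hx t ht).mul (hy t ht)).sub_const 1
    convert h0 using 1
    field_simp
    ring
  have hden : HasDerivAt (fun u => 4 * u * x u)
      (4 * x t + 4 * (x t) ^ 2 * y t) t := by
    have h4 : HasDerivAt (fun u : ℂ => 4 * u) 4 t := by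
      simpa using (hasDerivAt_id t).const_mul (4 : ℂ)
    have h5 := h4.mul (hx t ht)
    refine h5.congr_deriv (Eq.symm ?_)
    field_simp
  have hdne : 4 * t * x t ≠ 0 := by
    simp [ht0, hx0]
  have hp3 := hnum.div hden hdne
  have hp2 : HasDerivAt (fun u => (x u * y u - 1) / (4 * u * x u))
      (deriv p (t ^ 2) * (2 * t)) t := hp1.congr_of_eventuallyEq heqp.symm
  have E2 := hp2.unique hp3
  have ht20 : (t : ℂ) ^ 2 ≠ 0 := pow_ne_zero _ ht0
  have h2t : (2 : ℂ) * t ≠ 0 := mul_ne_zero two_ne_zero ht0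
  have hDq : deriv q (t ^ 2) = (x t + (x t) ^ 2 * y t) / (2 * t) := by
    rw [eq_div_iff h2t, E1]
    field_simp
  have hne : (2 : ℂ) * t * (x t * (4 * t * x t) ^ 2) ≠ 0 :=
    mul_ne_zero h2t (mul_ne_zero hx0 (pow_ne_zero _ hdne))
  field_simp at E2
  have hDp : deriv p (t ^ 2) =
      ((8 - 8 * (x t) ^ 2) * (4 * t * x t) -
        x t * ((x t * y t - 1) * (4 * x t + 4 * (x t) ^ 2 * y t))) /
      (2 * t * (x t * (4 * t * x t) ^ 2)) := by
    rw [eq_div_iff hne]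
    linear_combination (4 * x t) * E2
  constructor
  · have hd := (hqd t ht).hasDerivAt
    rw [hDq] at hd
    refine hd.congr_deriv (Eq.symm ?_)
    rw [hq t ht, hp t ht]
    field_simp
    ring
  · have hd := (hpd t ht).hasDerivAt
    rw [hDp] at hd
    refine hd.congr_deriv (Eq.symm ?_)
    rw [hq t ht, hp t ht, eq_div_iff hne]
    field_simp [ht0, hx0]
    ring
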